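/- Suppose ρ is irreducible and V admits a G-invariant positive-definite Hermitian form. Then V has a real form (an ℝ-subspace W ⊆ V invariant under all ρ(g) with V = W ⊕ iW as real vector spaces) if and only if V admits a nonzero G-invariant symmetric bilinear form. -/

import Mathlib

/-- Suppose `ρ` is irreducible and `V` admits a `G`-invariant
positive-definite Hermitian form.  Then `V` has a real form (a `G`-invariant real
subspace `W` with `V = W ⊕ iW` as real vector spaces) iff `V` admits a nonzero
`G`-invariant symmetric bilinear form. -/
theorem real_form_iff_symmetric_form
    {G V : Type*} [Group G] [AddCommGroup V] [Module ℂ V]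
    [FiniteDimensional ℂ V] [Nontrivial V]
    (ρ : G →* (V ≃ₗ[ℂ] V))
    (hirr : ∀ p : Submodule ℂ V, (∀ g : G, ∀ x ∈ p, ρ g x ∈ p) → p = ⊥ ∨ p = ⊤)
    (h : V → V → ℂ)
    (hadd₁ : ∀ x y z : V, h (x + y) z = h x z + h y z)
    (hsmul₁ : ∀ (c : ℂ) (x y : V), h (c • x) y = c * h x y)
    (hherm : ∀ x y : V, h y x = (starRingEnd ℂ) (h x y))
    (hpos : ∀ x : V, x ≠ 0 → 0 < (h x x).re)
    (hinvh : ∀ (g : G) (x y : V), h (ρ g x) (ρ g y) = h x y) :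
    (∃ W : Submodule ℝ V, (∀ g : G, ∀ v ∈ W, ρ g v ∈ W) ∧
        ∀ v : V, ∃! p : W × W, v = (p.1 : V) + Complex.I • (p.2 : V)) ↔
    (∃ q : V →ₗ[ℂ] V →ₗ[ℂ] ℂ, q ≠ 0 ∧
        (∀ (g : G) (x y : V), q (ρ g x) (ρ g y) = q x y) ∧
        (∀ x y : V, q x y = q y x)) := by
  have hadd₂ : ∀ x y z : V, h x (y + z) = h x y + h x z := by
    intro x y z
    rw [hherm (y + z) x, hadd₁, map_add, ← hherm, ← hherm]
  have hsmul₂ : ∀ (c : ℂ) (x y : V), h x (c • y) = (starRingEnd ℂ) c * h x y := by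
    intro c x y
    rw [hherm (c • y) x, hsmul₁, map_mul, ← hherm]
  have hzero₁ : ∀ x : V, h 0 x = 0 := by
    intro x
    have := hadd₁ 0 0 x
    rw [add_zero] at this
    linear_combination -this
  have hzero₂ : ∀ x : V, h x 0 = 0 := by
    intro x
    rw [hherm 0 x, hzero₁, map_zero]
  have hsub₂ : ∀ x y z : V, h x (y - z) = h x y - h x z := by
    intro x y z
    rw [sub_eq_add_neg, hadd₂, ← neg_one_smul ℂ z, hsmul₂]
    simp [sub_eq_add_neg]
  constructor
  · -- real form ⇒ nonzero invariant symmetric bilinear form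
    rintro ⟨W, hWinv, hdec⟩
    choose p hp hup using hdec
    set σ : V → V := fun v => ((p v).1 : V) - Complex.I • ((p v).2 : V) with hσdef
    have hσ : ∀ x y : V, x ∈ W → y ∈ W → σ (x + Complex.I • y) = x - Complex.I • y := by
      intro x y hx hy
      have h1 := hup (x + Complex.I • y) (⟨x, hx⟩, ⟨y, hy⟩) rfl
      rw [hσdef]
      simp only [← h1]
    have hmem1 : ∀ v : V, ((p v).1 : V) ∈ W := fun v => ((p v).1).2
    have hmem2 : ∀ v : V, ((p v).2 : V) ∈ W := fun v => ((p v).2).2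
    have habv : ∀ v : V, v = ((p v).1 : V) + Complex.I • ((p v).2 : V) := hp
    have hσv : ∀ v : V, σ v = ((p v).1 : V) - Complex.I • ((p v).2 : V) := fun v => rfl
    have hσadd : ∀ u v : V, σ (u + v) = σ u + σ v := by
      intro u v
      have h1 : u + v = (((p u).1 : V) + ((p v).1 : V)) +
          Complex.I • (((p u).2 : V) + ((p v).2 : V)) := by
        rw [smul_add]
        conv_lhs => rw [habv u, habv v]
        abel
      rw [h1, hσ _ _ (W.add_mem (hmem1 u) (hmem1 v)) (W.add_mem (hmem2 u) (hmem2 v)),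
        hσv u, hσv v, smul_add]
      abel
    have hσreal : ∀ (r : ℝ) (v : V), σ ((r : ℂ) • v) = (r : ℂ) • σ v := by
      intro r v
      have h1 : (r : ℂ) • v = ((r : ℂ) • ((p v).1 : V)) +
          Complex.I • ((r : ℂ) • ((p v).2 : V)) := by
        conv_lhs => rw [habv v]
        rw [smul_add, smul_comm]
      have hm1 : (r : ℂ) • ((p v).1 : V) ∈ W := by
        rw [Complex.coe_smul]; exact W.smul_mem r (hmem1 v)
      have hm2 : (r : ℂ) • ((p v).2 : V) ∈ W := by
        rw [Complex.coe_smul]; exact W.smul_mem r (hmem2 v)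
      rw [h1, hσ _ _ hm1 hm2, hσv v, smul_sub, smul_comm]
    have hσI : ∀ v : V, σ (Complex.I • v) = -(Complex.I • σ v) := by
      intro v
      have h1 : Complex.I • v = (-((p v).2 : V)) + Complex.I • ((p v).1 : V) := by
        conv_lhs => rw [habv v]
        rw [smul_add, smul_smul, Complex.I_mul_I, neg_one_smul]
        abel
      rw [h1, hσ _ _ (W.neg_mem (hmem2 v)) (hmem1 v), hσv v, smul_sub, smul_smul,
        Complex.I_mul_I, neg_one_smul]
      abel
    have hσsmul : ∀ (c : ℂ) (v : V), σ (c • v) = (starRingEnd ℂ) c • σ v := by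
      intro c v
      have h1 : c • v = (c.re : ℂ) • v + (c.im : ℂ) • (Complex.I • v) := by
        rw [smul_smul, ← add_smul]
        congr 1
        exact (Complex.re_add_im c).symm
      have h2 : (starRingEnd ℂ) c = (c.re : ℂ) - (c.im : ℂ) * Complex.I := by
        simp [Complex.ext_iff]
      rw [h1, hσadd, hσreal, hσreal, hσI, h2, sub_smul, mul_smul, smul_neg,
        sub_eq_add_neg]
    have hσg : ∀ (g : G) (v : V), σ (ρ g v) = ρ g (σ v) := by
      intro g v
      have h1 : ρ g v = (ρ g ((p v).1 : V)) + Complex.I • (ρ g ((p v).2 : V)) := by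
        conv_lhs => rw [habv v]
        rw [map_add, map_smul]
      rw [h1, hσ _ _ (hWinv g _ (hmem1 v)) (hWinv g _ (hmem2 v)), hσv v, map_sub, map_smul]
    -- the bilinear form
    refine ⟨LinearMap.mk₂ ℂ (fun x y => h x (σ y) + h y (σ x))
      (fun x x' y => by rw [hadd₁, hσadd, hadd₂]; ring)
      (fun c x y => by
        rw [hsmul₁, hσsmul, hsmul₂, Complex.conj_conj, smul_eq_mul]; ring)
      (fun x y y' => by rw [hσadd, hadd₂, hadd₁]; ring)
      (fun c x y => by
        rw [hσsmul, hsmul₂, Complex.conj_conj, hsmul₁, smul_eq_mul]; ring), ?_, ?_, ?_⟩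
    · -- nonzero
      obtain ⟨v, hv⟩ := exists_ne (0 : V)
      have hw : ∃ w : V, w ∈ W ∧ w ≠ 0 := by
        by_cases ha : ((p v).1 : V) = 0
        · refine ⟨((p v).2 : V), hmem2 v, ?_⟩
          intro hb
          apply hv
          rw [habv v, ha, hb, smul_zero, add_zero]
        · exact ⟨_, hmem1 v, ha⟩
      obtain ⟨w, hwW, hw0⟩ := hw
      have hσw : σ w = w := by
        have := hσ w 0 hwW W.zero_mem
        rwa [smul_zero, add_zero, sub_zero] at this
      intro hq
      have h1 := LinearMap.congr_fun (LinearMap.congr_fun hq w) w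
      simp only [LinearMap.mk₂_apply, LinearMap.zero_apply] at h1
      rw [hσw] at h1
      have h2 := hpos w hw0
      have h3 := congrArg Complex.re h1
      simp only [Complex.add_re, Complex.zero_re] at h3
      linarith
    · -- invariance
      intro g x y
      simp only [LinearMap.mk₂_apply]
      rw [hσg, hσg, hinvh, hinvh]
    · -- symmetry
      intro x y
      simp only [LinearMap.mk₂_apply]
      ring
  · -- nonzero invariant symmetric bilinear form ⇒ real form
    rintro ⟨q, hq0, hqinv, hqsym⟩
    classical
    -- nondegeneracy of h
    have hinj : ∀ z z' : V, (∀ x, h x z = h x z') → z = z' := by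
      intro z z' hzz
      by_contra hne
      have hd : z - z' ≠ 0 := sub_ne_zero.mpr hne
      have h1 : h (z - z') (z - z') = 0 := by
        rw [hsub₂, hzz (z - z'), sub_self]
      have := hpos _ hd
      rw [h1] at this
      simp at this
    -- inner product space structure from h
    letI core : InnerProductSpace.Core ℂ V :=
      { inner := fun x y => h y x
        conj_inner_symm := fun x y => (hherm x y).symm
        re_inner_nonneg := fun x => by
          show 0 ≤ (h x x).re
          by_cases hx : x = 0
          · subst hx; rw [hzero₂]; simp
          · exact le_of_lt (hpos x hx)
        definite := fun x hx => by
          by_contra hne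
          have := hpos x hne
          rw [show h x x = 0 from hx] at this
          simp at this
        add_left := fun x y z => hadd₂ z x y
        smul_left := fun x y r => hsmul₂ r y x }
    letI : NormedAddCommGroup V := core.toNormedAddCommGroup
    letI : InnerProductSpace ℂ V := InnerProductSpace.ofCore core.toCore
    letI : CompleteSpace V := FiniteDimensional.complete ℂ V
    have hinner : ∀ x y : V, (inner ℂ x y : ℂ) = h y x := fun x y => rfl
    -- Riesz representation: τ y is the vector with h x (τ y) = q x y for all x
    set τ : V → V := fun y =>
      (InnerProductSpace.toDual ℂ V).symm (LinearMap.toContinuousLinearMap (q.flip y)) with hτdef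
    have hτ : ∀ x y : V, h x (τ y) = q x y := by
      intro x y
      have := InnerProductSpace.toDual_symm_apply (𝕜 := ℂ) (E := V)
        (x := x) (y := LinearMap.toContinuousLinearMap (q.flip y))
      rw [hinner] at this
      rw [hτdef]
      simp only [this]
      simp [LinearMap.flip_apply]
    have hτadd : ∀ u v : V, τ (u + v) = τ u + τ v := by
      intro u v
      apply hinj
      intro x
      rw [hτ, hadd₂, hτ, hτ, map_add]
    have hτsmul : ∀ (c : ℂ) (v : V), τ (c • v) = (starRingEnd ℂ) c • τ v := by
      intro c v
      apply hinj
      intro x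
      rw [hτ, hsmul₂, Complex.conj_conj, hτ, map_smul, smul_eq_mul]
    have hρρ : ∀ (g : G) (x : V), ρ g (ρ g⁻¹ x) = x := by
      intro g x
      have : ρ g * ρ g⁻¹ = 1 := by rw [← map_mul, mul_inv_cancel, map_one]
      calc ρ g (ρ g⁻¹ x) = (ρ g * ρ g⁻¹) x := rfl
        _ = x := by rw [this]; rfl
    have hτg : ∀ (g : G) (v : V), τ (ρ g v) = ρ g (τ v) := by
      intro g v
      apply hinj
      intro x
      rw [hτ]
      calc q x (ρ g v) = q (ρ g (ρ g⁻¹ x)) (ρ g v) := by rw [hρρ]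
        _ = q (ρ g⁻¹ x) v := hqinv g _ v
        _ = h (ρ g⁻¹ x) (τ v) := (hτ _ _).symm
        _ = h (ρ g (ρ g⁻¹ x)) (ρ g (τ v)) := (hinvh g _ _).symm
        _ = h x (ρ g (τ v)) := by rw [hρρ]
    -- Schur: τ ∘ τ is a scalar μ
    set f : Module.End ℂ V :=
      { toFun := fun v => τ (τ v)
        map_add' := fun u v => by
          show τ (τ (u + v)) = τ (τ u) + τ (τ v)
          rw [hτadd, hτadd]
        map_smul' := fun c v => by
          show τ (τ (c • v)) = (RingHom.id ℂ) c • τ (τ v)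
          rw [hτsmul, hτsmul, Complex.conj_conj, RingHom.id_apply] } with hfdef
    have hfapp : ∀ v : V, f v = τ (τ v) := fun v => rfl
    obtain ⟨μ, hμ⟩ := Module.End.exists_eigenvalue f
    obtain ⟨v₀, hv₀⟩ := hμ.exists_hasEigenvector
    have hU : ∀ x : V, τ (τ x) = μ • x := by
      have hUinv : ∀ g : G, ∀ x ∈ f.eigenspace μ, ρ g x ∈ f.eigenspace μ := by
        intro g x hx
        rw [Module.End.mem_eigenspace_iff] at hx ⊢
        rw [hfapp, hτg, hτg, ← hfapp, hx, map_smul]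
      rcases hirr (f.eigenspace μ) hUinv with hbot | htop
      · exact absurd hbot hμ
      · intro x
        have hx : x ∈ f.eigenspace μ := htop ▸ Submodule.mem_top
        rw [Module.End.mem_eigenspace_iff] at hx
        rw [← hfapp, hx]
    -- μ is a positive real
    have hqne : ∃ x y : V, q x y ≠ 0 := by
      by_contra hc
      push_neg at hc
      exact hq0 (by ext x y; simp [hc])
    obtain ⟨x₀, y₀, hxy₀⟩ := hqne
    have hτy₀ : τ y₀ ≠ 0 := by
      intro hz
      apply hxy₀
      rw [← hτ, hz, hzero₂]
    have hy₀ : y₀ ≠ 0 := by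
      intro hz
      apply hτy₀
      rw [hz]
      apply hinj
      intro x
      rw [hτ, map_zero, hzero₂]
    have hreal : ∀ z : V, ((h z z).im = 0) := by
      intro z
      rw [← Complex.conj_eq_iff_im]
      exact (hherm z z).symm
    have hswap : ∀ x y : V, h x (τ y) = h y (τ x) := by
      intro x y
      rw [hτ, hτ, hqsym]
    have hμval : (starRingEnd ℂ) μ * h y₀ y₀ = h (τ y₀) (τ y₀) := by
      calc (starRingEnd ℂ) μ * h y₀ y₀ = h y₀ (μ • y₀) := (hsmul₂ μ y₀ y₀).symm
        _ = h y₀ (τ (τ y₀)) := by rw [hU]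
        _ = h (τ y₀) (τ y₀) := (hswap (τ y₀) y₀).symm
    have hA := hpos _ hτy₀
    have hB := hpos _ hy₀
    set r : ℝ := (h (τ y₀) (τ y₀)).re / (h y₀ y₀).re with hrdef
    have hr : 0 < r := div_pos hA hB
    have hμr : μ = (r : ℂ) := by
      have hBc : h y₀ y₀ = ((h y₀ y₀).re : ℂ) := by
        rw [Complex.ext_iff]
        simp [hreal y₀]
      have hAc : h (τ y₀) (τ y₀) = ((h (τ y₀) (τ y₀)).re : ℂ) := by
        rw [Complex.ext_iff]
        simp [hreal (τ y₀)]
      have hBne : ((h y₀ y₀).re : ℂ) ≠ 0 := by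
        simp only [ne_eq, Complex.ofReal_eq_zero]
        exact ne_of_gt hB
      have h1 : (starRingEnd ℂ) μ = (r : ℂ) := by
        rw [hrdef]
        push_cast
        rw [← hAc, ← hBc, eq_div_iff (by rw [hBc] at hBne ⊢; exact hBne)]
        rw [← hμval, mul_comm]
      calc μ = (starRingEnd ℂ) ((starRingEnd ℂ) μ) := (Complex.conj_conj μ).symm
        _ = (starRingEnd ℂ) (r : ℂ) := by rw [h1]
        _ = (r : ℂ) := Complex.conj_ofReal r
    have hτsub : ∀ u v : V, τ (u - v) = τ u - τ v := by
      intro u v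
      apply hinj
      intro x
      rw [hτ, map_sub, hsub₂, hτ, hτ]
    have hτ0 : τ 0 = 0 := by
      apply hinj
      intro x
      rw [hτ, map_zero, hzero₂]
    -- normalize to an antilinear involution σ
    set t : ℝ := Real.sqrt r with htdef
    have ht2 : t * t = r := Real.mul_self_sqrt hr.le
    have ht0 : t ≠ 0 := by
      intro hz
      rw [hz, zero_mul] at ht2
      exact absurd ht2.symm (ne_of_gt hr)
    set σ : V → V := fun v => ((t⁻¹ : ℝ) : ℂ) • τ v with hσdef
    have hσapp : ∀ v : V, σ v = ((t⁻¹ : ℝ) : ℂ) • τ v := fun v => rfl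
    have hσσ : ∀ v : V, σ (σ v) = v := by
      intro v
      rw [hσapp, hσapp, hτsmul, hU, Complex.conj_ofReal, smul_smul, smul_smul, hμr]
      rw [show ((t⁻¹:ℝ):ℂ) * ((t⁻¹:ℝ):ℂ) * (r:ℂ) = ((t⁻¹ * t⁻¹ * r : ℝ) : ℂ) by push_cast; ring]
      rw [show t⁻¹ * t⁻¹ * r = 1 by rw [← ht2]; field_simp]
      push_cast
      rw [one_smul]
    have hσadd : ∀ u v : V, σ (u + v) = σ u + σ v := by
      intro u v
      rw [hσapp, hσapp, hσapp, hτadd, smul_add]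
    have hσsub : ∀ u v : V, σ (u - v) = σ u - σ v := by
      intro u v
      rw [hσapp, hσapp, hσapp, hτsub, smul_sub]
    have hσsmul : ∀ (c : ℂ) (v : V), σ (c • v) = (starRingEnd ℂ) c • σ v := by
      intro c v
      rw [hσapp, hτsmul, hσapp, smul_comm]
    have hσzero : σ 0 = 0 := by rw [hσapp, hτ0, smul_zero]
    have hσg : ∀ (g : G) (v : V), σ (ρ g v) = ρ g (σ v) := by
      intro g v
      rw [hσapp, hτg, hσapp, map_smul]
    -- the real form W = fixed points of σ
    refine ⟨{ carrier := {v : V | σ v = v}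
              add_mem' := fun {a b} ha hb => by
                simp only [Set.mem_setOf_eq] at *
                rw [hσadd, ha, hb]
              zero_mem' := hσzero
              smul_mem' := fun c v hv => by
                simp only [Set.mem_setOf_eq] at *
                rw [← Complex.coe_smul, hσsmul, Complex.conj_ofReal, hv] }, ?_, ?_⟩
    · intro g v hv
      show σ (ρ g v) = ρ g v
      rw [hσg, show σ v = v from hv]
    · intro v
      set av : V := (2⁻¹ : ℂ) • (v + σ v) with havdef
      set bv : V := (-(2⁻¹ : ℂ) * Complex.I) • (v - σ v) with hbvdef
      have haW : σ av = av := by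
        rw [havdef, hσsmul, hσadd, hσσ,
          show (starRingEnd ℂ) (2⁻¹ : ℂ) = (2⁻¹ : ℂ) by simp [Complex.ext_iff]]
        rw [add_comm]
      have hbW : σ bv = bv := by
        rw [hbvdef, hσsmul, hσsub, hσσ,
          show (starRingEnd ℂ) (-(2⁻¹ : ℂ) * Complex.I) = (2⁻¹ : ℂ) * Complex.I by simp [Complex.ext_iff]]
        module
      have hdecomp : v = av + Complex.I • bv := by
        rw [havdef, hbvdef, smul_smul,
          show Complex.I * (-(2⁻¹ : ℂ) * Complex.I) = (2⁻¹ : ℂ) by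
            rw [show Complex.I * (-(2⁻¹:ℂ) * Complex.I)
                = -(2⁻¹:ℂ) * (Complex.I * Complex.I) by ring, Complex.I_mul_I]; ring]
        module
      refine ⟨(⟨av, haW⟩, ⟨bv, hbW⟩), hdecomp, ?_⟩
      rintro ⟨⟨x, hx⟩, ⟨y, hy⟩⟩ hxy
      simp only at hxy
      have hσx : σ x = x := hx
      have hσy : σ y = y := hy
      have hσv' : σ v = x - Complex.I • y := by
        rw [hxy, hσadd, hσx, hσsmul, hσy, Complex.conj_I, neg_smul, sub_eq_add_neg]
      have hax : x = av := by
        rw [havdef, hσv', hxy]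
        module
      have hby : y = bv := by
        rw [hbvdef, hσv', hxy]
        rw [show (x + Complex.I • y) - (x - Complex.I • y) = (2 * Complex.I) • y by module]
        rw [smul_smul, show -(2⁻¹:ℂ) * Complex.I * (2 * Complex.I)
            = -(Complex.I * Complex.I) by ring, Complex.I_mul_I, neg_neg, one_smul]
      simp only [Prod.mk.injEq]
      exact ⟨Subtype.ext hax, Subtype.ext hby⟩
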